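/- Let r ≥ 1, h, v ≥ 0 be integers and c₁sq, crsq ∈ ℤ. The system in positive reals β₁,…,β_r, δ₁,…,δ_h, γ₁,…,γ_v consisting of: δ₁ + (crsq - 1)•β_r > 0 (if h ≥ 1), γ₁ + (c₁sq - 1)•β₁ > 0 (if v ≥ 1), δᵢ - 2δ_{i-1} + δ_{i-2} > 0 for 2 ≤ i ≤ h (with δ₀ := β_r), and γ_j - 2γ_{j-1} + γ_{j-2} > 0 for 2 ≤ j ≤ v (with γ₀ := β₁), is feasible, with solutions having all coordinates arbitrarily small. -/
import Mathlib


/-- Feasibility of the combined tail blow-up linear program `LP~(S,C)` on both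
tails, with all coordinates arbitrarily small (Theorem TailThm1). Here
`δ 0 = β r` and `γ 0 = β 1` are conventions. -/
theorem stmt7 (r h v : ℕ) (hr : 1 ≤ r) (c1sq crsq : ℤ) :
    ∀ ε > (0:ℝ), ∃ β δ γ : ℕ → ℝ,
      δ 0 = β r ∧ γ 0 = β 1 ∧
      (∀ i, 1 ≤ i → i ≤ r → 0 < β i ∧ β i < ε) ∧
      (∀ i, 1 ≤ i → i ≤ h → 0 < δ i ∧ δ i < ε) ∧
      (∀ j, 1 ≤ j → j ≤ v → 0 < γ j ∧ γ j < ε) ∧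
      (1 ≤ h → δ 1 + ((crsq:ℝ) - 1) * β r > 0) ∧
      (1 ≤ v → γ 1 + ((c1sq:ℝ) - 1) * β 1 > 0) ∧
      (∀ i, 2 ≤ i → i ≤ h → δ i - 2 * δ (i-1) + δ (i-2) > 0) ∧
      (∀ j, 2 ≤ j → j ≤ v → γ j - 2 * γ (j-1) + γ (j-2) > 0) := by
  intro ε hε
  set K : ℝ := max 2 (2 - (crsq : ℝ)) with hKdef
  set L : ℝ := max 2 (2 - (c1sq : ℝ)) with hLdef
  have hK2 : (2:ℝ) ≤ K := le_max_left _ _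
  have hL2 : (2:ℝ) ≤ L := le_max_left _ _
  have hKc : (2:ℝ) - crsq ≤ K := le_max_right _ _
  have hLc : (2:ℝ) - c1sq ≤ L := le_max_right _ _
  set M : ℝ := max K L with hMdef
  have hKM : K ≤ M := le_max_left _ _
  have hLM : L ≤ M := le_max_right _ _
  have hM2 : (2:ℝ) ≤ M := le_trans hK2 hKM
  set N : ℕ := max h v with hNdef
  have hMN : (0:ℝ) < M ^ N := pow_pos (by linarith) N
  have hMN1 : (1:ℝ) ≤ M ^ N := one_le_pow₀ (by linarith : (1:ℝ) ≤ M)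
  set b : ℝ := ε / (2 * M ^ N) with hbdef
  have hb : 0 < b := div_pos hε (by positivity)
  have hbε : b * M ^ N < ε := by
    rw [hbdef, div_mul_eq_mul_div]
    rw [div_lt_iff₀ (by positivity)]
    nlinarith
  refine ⟨fun _ => b, fun i => b * K ^ i, fun j => b * L ^ j, by simp, by simp, ?_, ?_, ?_, ?_, ?_, ?_, ?_⟩
  · intro i _ _
    refine ⟨hb, ?_⟩
    calc b = b * 1 := by ring
    _ ≤ b * M ^ N := by nlinarith
    _ < ε := hbε
  · intro i hi1 hih
    have hKpos : (0:ℝ) < K := by linarith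
    refine ⟨by positivity, ?_⟩
    have h1 : K ^ i ≤ M ^ i := pow_le_pow_left₀ (by linarith) hKM i
    have h2 : M ^ i ≤ M ^ N := pow_le_pow_right₀ (by linarith) (le_trans hih (le_max_left h v))
    calc b * K ^ i ≤ b * M ^ N := by nlinarith
    _ < ε := hbε
  · intro j hj1 hjv
    have hLpos : (0:ℝ) < L := by linarith
    refine ⟨by positivity, ?_⟩
    have h1 : L ^ j ≤ M ^ j := pow_le_pow_left₀ (by linarith) hLM j
    have h2 : M ^ j ≤ M ^ N := pow_le_pow_right₀ (by linarith) (le_trans hjv (le_max_right h v))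
    calc b * L ^ j ≤ b * M ^ N := by nlinarith
    _ < ε := hbε
  · intro _
    show b * K ^ 1 + ((crsq:ℝ) - 1) * b > 0
    rw [pow_one]
    nlinarith
  · intro _
    show b * L ^ 1 + ((c1sq:ℝ) - 1) * b > 0
    rw [pow_one]
    nlinarith
  · intro i hi2 _
    obtain ⟨n, rfl⟩ : ∃ n, i = n + 2 := ⟨i - 2, by omega⟩
    have h1 : n + 2 - 1 = n + 1 := by omega
    have h2 : n + 2 - 2 = n := by omega
    rw [h1, h2]
    show b * K ^ (n+2) - 2 * (b * K ^ (n+1)) + b * K ^ n > 0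
    have hKn : (0:ℝ) < K ^ n := pow_pos (by linarith) n
    have e1 : K ^ (n+2) = K ^ n * (K * K) := by ring
    have e2 : K ^ (n+1) = K ^ n * K := by ring
    rw [e1, e2]
    have key : 0 < (b * K ^ n) * ((K - 1) ^ 2) :=
      mul_pos (mul_pos hb hKn) (pow_pos (by linarith) 2)
    nlinarith [key]
  · intro j hj2 _
    obtain ⟨n, rfl⟩ : ∃ n, j = n + 2 := ⟨j - 2, by omega⟩
    have h1 : n + 2 - 1 = n + 1 := by omega
    have h2 : n + 2 - 2 = n := by omega
    rw [h1, h2]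
    show b * L ^ (n+2) - 2 * (b * L ^ (n+1)) + b * L ^ n > 0
    have hLn : (0:ℝ) < L ^ n := pow_pos (by linarith) n
    have e1 : L ^ (n+2) = L ^ n * (L * L) := by ring
    have e2 : L ^ (n+1) = L ^ n * L := by ring
    rw [e1, e2]
    have key : 0 < (b * L ^ n) * ((L - 1) ^ 2) :=
      mul_pos (mul_pos hb hLn) (pow_pos (by linarith) 2)
    nlinarith [key]
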